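/- Let 1 ≤ m ≤ n, let d_1,…,d_m, b_1,…,b_{n−1} be real numbers, and define F : R^{m+n−1} → R^{m+n−1} by F_i(θ) = d_i − Σ_{j=1}^n e^{α_i+β_j}/(1+e^{α_i+β_j}) for i = 1,…,m and F_{m+j}(θ) = b_j − Σ_{i=1}^m e^{α_i+β_j}/(1+e^{α_i+β_j}) for j = 1,…,n−1 (with β_n = 0). Then for all x, y ∈ R^{m+n−1}: max_{1≤i≤m+n−1} ‖F′_i(x) − F′_i(y)‖_∞ ≤ (n/2) ‖x − y‖_∞, where F′_i denotes the gradient vector of F_i. -/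

import Mathlib

open MeasureTheory ProbabilityTheory Filter Matrix Topology
open scoped ENNReal NNReal

noncomputable section

namespace Affiliation

/-- Index type for the parameter vector `θ ∈ ℝ^{m+n-1}`:
`Sum.inl i` corresponds to the coordinate `α_i` (`1 ≤ i ≤ m`),
`Sum.inr j` to the coordinate `β_j` (`1 ≤ j ≤ n-1`). -/
abbrev Idx (m n : ℕ) := Fin m ⊕ Fin (n - 1)

/-- The logistic function `e^x / (1 + e^x)`. -/
def pf (x : ℝ) : ℝ := Real.exp x / (1 + Real.exp x)

/-- `e^x / (1 + e^x)^2`, the derivative of the logistic function. -/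
def pf' (x : ℝ) : ℝ := Real.exp x / (1 + Real.exp x) ^ 2

variable {m n : ℕ} {Ω : Type*}

/-- `α_i` read off from `θ`. -/
def alphaF (θ : Idx m n → ℝ) (i : Fin m) : ℝ := θ (Sum.inl i)

/-- `β_j` read off from `θ`, with the convention `β_n = 0`. -/
def betaF (θ : Idx m n → ℝ) (j : Fin n) : ℝ :=
  if h : (j : ℕ) < n - 1 then θ (Sum.inr ⟨j, h⟩) else 0

/-- The degree `d_i = Σ_j x_{ij}` of event `i`. -/
def degVec (X : Fin m → Fin n → Ω → ℝ) (ω : Ω) (i : Fin m) : ℝ := ∑ j, X i j ω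

/-- The degree `b_j = Σ_i x_{ij}` of actor `j`. -/
def bVec (X : Fin m → Fin n → Ω → ℝ) (ω : Ω) (j : Fin n) : ℝ := ∑ i, X i j ω

/-- The vector `g = (d_1, …, d_m, b_1, …, b_{n-1})`. -/
def gvec (X : Fin m → Fin n → Ω → ℝ) (ω : Ω) : Idx m n → ℝ :=
  Sum.elim (degVec X ω) (fun j => bVec X ω (Fin.castLE (Nat.sub_le n 1) j))

/-- The affiliation network model: the `x_{ij}` are mutually independent `{0,1}`-valued
random variables with `P(x_{ij} = 1) = e^{α_i+β_j}/(1+e^{α_i+β_j})` (convention `β_n = 0`). -/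
structure IsAffilModel [MeasurableSpace Ω] (P : Measure Ω)
    (θ : Idx m n → ℝ) (X : Fin m → Fin n → Ω → ℝ) : Prop where
  isProb : IsProbabilityMeasure P
  meas : ∀ i j, Measurable (X i j)
  binary : ∀ i j ω, X i j ω = 0 ∨ X i j ω = 1
  indep : iIndepFun
    (fun p : Fin m × Fin n => X p.1 p.2) P
  prob_one : ∀ i j, P {ω | X i j ω = 1} = ENNReal.ofReal (pf (alphaF θ i + betaF θ j))

/-- The expectation `E g`. -/
def Eg [MeasurableSpace Ω] (P : Measure Ω) (X : Fin m → Fin n → Ω → ℝ) (k : Idx m n) : ℝ :=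
  ∫ ω, gvec X ω k ∂P

/-- The likelihood equations: `θ` is an MLE for the observed degrees `(d, b)`. -/
def IsMLE (d : Fin m → ℝ) (b : Fin (n - 1) → ℝ) (θ : Idx m n → ℝ) : Prop :=
  (∀ i, d i = ∑ j : Fin n, pf (alphaF θ i + betaF θ j)) ∧
  (∀ j : Fin (n - 1), b j = ∑ i : Fin m, pf (alphaF θ i + θ (Sum.inr j)))

/-- `θ` is an MLE for the degrees observed at the sample point `ω`. -/
def IsMLEat (X : Fin m → Fin n → Ω → ℝ) (ω : Ω) (θ : Idx m n → ℝ) : Prop :=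
  IsMLE (degVec X ω) (fun j => bVec X ω (Fin.castLE (Nat.sub_le n 1) j)) θ

/-- The Fisher information matrix `V(θ)`. -/
def fisher (θ : Idx m n → ℝ) : Matrix (Idx m n) (Idx m n) ℝ :=
  fun k l => match k, l with
  | Sum.inl i, Sum.inl i' => if i = i' then ∑ j : Fin n, pf' (alphaF θ i + betaF θ j) else 0
  | Sum.inl i, Sum.inr j => pf' (alphaF θ i + θ (Sum.inr j))
  | Sum.inr j, Sum.inl i => pf' (alphaF θ i + θ (Sum.inr j))
  | Sum.inr j, Sum.inr j' => if j = j' then ∑ i : Fin m, pf' (alphaF θ i + θ (Sum.inr j)) else 0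

/-- `v_{i,m+n} := v_{ii} - Σ_{j ≠ i} v_{ij}`. -/
def vRem (V : Matrix (Idx m n) (Idx m n) ℝ) (i : Idx m n) : ℝ :=
  V i i - ∑ j ∈ Finset.univ.erase i, V i j

/-- `v_{m+n,m+n} := Σ_{i=1}^{m+n-1} v_{i,m+n}`. -/
def vnnOf (V : Matrix (Idx m n) (Idx m n) ℝ) : ℝ := ∑ i, vRem V i

/-- `v_{m+n,m+n}` for the Fisher information matrix,
`Σ_{i=1}^m (v_{ii} - Σ_{j=m+1}^{m+n-1} v_{ij})`. -/
def vnnFisher (θ : Idx m n → ℝ) : ℝ :=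
  ∑ i : Fin m,
    (fisher θ (Sum.inl i) (Sum.inl i) - ∑ j : Fin (n - 1), fisher θ (Sum.inl i) (Sum.inr j))

/-- The approximating matrix `S` built from `V`, with `1/v_{m+n,m+n}` replaced by `1/c`. -/
def approxSWith (V : Matrix (Idx m n) (Idx m n) ℝ) (c : ℝ) : Matrix (Idx m n) (Idx m n) ℝ :=
  fun k l => match k, l with
  | Sum.inl i, Sum.inl i' => (if i = i' then (V (Sum.inl i) (Sum.inl i))⁻¹ else 0) + c⁻¹
  | Sum.inr j, Sum.inr j' => (if j = j' then (V (Sum.inr j) (Sum.inr j))⁻¹ else 0) + c⁻¹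
  | _, _ => -c⁻¹

/-- The approximating matrix `S` built from a matrix `V` in the class `L_{m,n}(q,Q)`. -/
def approxS (V : Matrix (Idx m n) (Idx m n) ℝ) : Matrix (Idx m n) (Idx m n) ℝ :=
  approxSWith V (vnnOf V)

/-- The approximating matrix `S` built from the Fisher information matrix `V(θ)`. -/
def fisherS (θ : Idx m n → ℝ) : Matrix (Idx m n) (Idx m n) ℝ :=
  approxSWith (fisher θ) (vnnFisher θ)

/-- Membership in the matrix class `L_{m,n}(q,Q)`. -/
structure MemL (m n : ℕ) (q Q : ℝ) (V : Matrix (Idx m n) (Idx m n) ℝ) : Prop where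
  symm : V.IsSymm
  nonneg : ∀ i j, 0 ≤ V i j
  zero_ll : ∀ a b : Fin m, a ≠ b → V (Sum.inl a) (Sum.inl b) = 0
  zero_rr : ∀ a b : Fin (n - 1), a ≠ b → V (Sum.inr a) (Sum.inr b) = 0
  cross_lb : ∀ (a : Fin m) (b : Fin (n - 1)), q ≤ V (Sum.inl a) (Sum.inr b)
  cross_ub : ∀ (a : Fin m) (b : Fin (n - 1)), V (Sum.inl a) (Sum.inr b) ≤ Q
  diag_l_lb : ∀ a : Fin m,
    q ≤ V (Sum.inl a) (Sum.inl a) - ∑ b : Fin (n - 1), V (Sum.inl a) (Sum.inr b)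
  diag_l_ub : ∀ a : Fin m,
    V (Sum.inl a) (Sum.inl a) - ∑ b : Fin (n - 1), V (Sum.inl a) (Sum.inr b) ≤ Q
  diag_r : ∀ b : Fin (n - 1), V (Sum.inr b) (Sum.inr b) = ∑ a : Fin m, V (Sum.inl a) (Sum.inr b)

/-- `‖A‖ := max_{i,j} |a_{ij}|`. -/
def matNorm (A : Matrix (Idx m n) (Idx m n) ℝ) : ℝ :=
  ‖fun p : Idx m n × Idx m n => A p.1 p.2‖

/-- The index (0-based) `i` of `θ ∈ ℝ^{m+n-1}` as an element of `Idx m n`, if it exists. -/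
def coordIdx (m n i : ℕ) : Option (Idx m n) :=
  if h : i < m then some (Sum.inl ⟨i, h⟩)
  else if h' : i - m < n - 1 then some (Sum.inr ⟨i - m, h'⟩)
  else none

/-- The `i`-th coordinate (0-based) of a vector `x ∈ ℝ^{m+n-1}` (junk value `0` out of range). -/
def coordVal (x : Idx m n → ℝ) (i : ℕ) : ℝ := ((coordIdx m n i).map x).getD 0

/-- The upper-left `k × k` block of a matrix indexed by `Idx m n`. -/
def blockK (A : Matrix (Idx m n) (Idx m n) ℝ) (k : ℕ) : Matrix (Fin k) (Fin k) ℝ :=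
  fun i j => match coordIdx m n (i : ℕ), coordIdx m n (j : ℕ) with
    | some a, some b => A a b
    | _, _ => 0

/-- The inverse square root `A^{-1/2}` of a positive semidefinite matrix
(junk value `0` if `A` is not positive semidefinite). -/
def invSqrt {k : ℕ} (A : Matrix (Fin k) (Fin k) ℝ) : Matrix (Fin k) (Fin k) ℝ :=
  letI := Classical.propDecidable A.PosSemidef
  if h : A.PosSemidef then
    (h.1.eigenvectorUnitary.1 * Matrix.diagonal (RCLike.ofReal ∘ Real.sqrt ∘ h.1.eigenvalues) *
      (star h.1.eigenvectorUnitary : Matrix (Fin k) (Fin k) ℝ))⁻¹ else 0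

/-- The standard Gaussian distribution `N(0, I_k)` on `ℝ^k`. -/
def stdGaussian (k : ℕ) : Measure (Fin k → ℝ) :=
  Measure.pi fun _ => gaussianReal 0 1

/-- The function `F(θ)` whose components are
`F_i(θ) = d_i - Σ_k f(α_i + β_k)` and `F_{m+j}(θ) = b_j - Σ_k f(α_k + β_j)`. -/
def Fvec (f : ℝ → ℝ) (d : Fin m → ℝ) (b : Fin (n - 1) → ℝ) (θ : Idx m n → ℝ) : Idx m n → ℝ :=
  fun k => match k with
  | Sum.inl i => d i - ∑ j : Fin n, f (alphaF θ i + betaF θ j)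
  | Sum.inr j => b j - ∑ i : Fin m, f (alphaF θ i + θ (Sum.inr j))

/-- The Jacobian matrix `F'(θ)` of `Fvec f d b`. -/
def jacF (f : ℝ → ℝ) (θ : Idx m n → ℝ) : Matrix (Idx m n) (Idx m n) ℝ :=
  fun k l => match k, l with
  | Sum.inl i, Sum.inl i' =>
      if i = i' then -∑ j : Fin n, deriv f (alphaF θ i + betaF θ j) else 0
  | Sum.inl i, Sum.inr j => -deriv f (alphaF θ i + θ (Sum.inr j))
  | Sum.inr j, Sum.inl i => -deriv f (alphaF θ i + θ (Sum.inr j))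
  | Sum.inr j, Sum.inr j' =>
      if j = j' then -∑ i : Fin m, deriv f (alphaF θ i + θ (Sum.inr j)) else 0

/-- The Newton iterates `θ^{(k+1)} = θ^{(k)} - [F'(θ^{(k)})]⁻¹ F(θ^{(k)})`. -/
def newton (f : ℝ → ℝ) (d : Fin m → ℝ) (b : Fin (n - 1) → ℝ) (θ0 : Idx m n → ℝ) :
    ℕ → Idx m n → ℝ
  | 0 => θ0
  | k + 1 =>
    newton f d b θ0 k - (jacF f (newton f d b θ0 k))⁻¹.mulVec (Fvec f d b (newton f d b θ0 k))

lemma one_add_exp_pos (a : ℝ) : 0 < 1 + Real.exp a := by positivity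

lemma pf_hasDerivAt (a : ℝ) : HasDerivAt pf (pf' a) a := by
  have h := (Real.hasDerivAt_exp a).div ((hasDerivAt_const a (1:ℝ)).add (Real.hasDerivAt_exp a))
    (ne_of_gt (one_add_exp_pos a))
  refine h.congr_deriv ?_
  simp only [Pi.add_apply]
  unfold pf'
  field_simp
  ring

lemma deriv_pf (a : ℝ) : deriv pf a = pf' a := (pf_hasDerivAt a).deriv

lemma pf'_hasDerivAt (a : ℝ) :
    HasDerivAt pf' (Real.exp a * (1 - Real.exp a) / (1 + Real.exp a) ^ 3) a := by
  have hd : HasDerivAt (fun x => (1 + Real.exp x) ^ 2)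
      (2 * (1 + Real.exp a) * Real.exp a) a := by
    have := ((hasDerivAt_const a (1:ℝ)).add (Real.hasDerivAt_exp a)).pow 2
    refine this.congr_deriv ?_; simp only [Pi.add_apply]; ring
  have h := (Real.hasDerivAt_exp a).div hd (by positivity)
  refine h.congr_deriv ?_
  have hne : (1 + Real.exp a) ≠ 0 := ne_of_gt (one_add_exp_pos a)
  field_simp
  ring

lemma pf''_bound (a : ℝ) : |Real.exp a * (1 - Real.exp a) / (1 + Real.exp a) ^ 3| ≤ 1/4 := by
  set e := Real.exp a with he
  have hepos : 0 < e := Real.exp_pos a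
  have h1 : 0 < (1 + e) ^ 3 := by positivity
  rw [abs_div, abs_of_pos h1, div_le_iff₀ h1, abs_mul, abs_of_pos hepos]
  have h2 : |1 - e| ≤ 1 + e := by
    rw [abs_le]; constructor <;> nlinarith
  calc e * |1 - e| ≤ e * (1 + e) := by nlinarith
    _ ≤ 1/4 * (1+e)^3 := by nlinarith [sq_nonneg (1 - e)]

lemma pf'_lip (a b : ℝ) : |pf' a - pf' b| ≤ (1/4) * |a - b| := by
  have := Convex.norm_image_sub_le_of_norm_deriv_le (f := pf') (C := 1/4) (s := Set.univ)
    (fun x _ => (pf'_hasDerivAt x).differentiableAt)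
    (fun x _ => by rw [(pf'_hasDerivAt x).deriv]; exact (pf''_bound x))
    convex_univ (Set.mem_univ b) (Set.mem_univ a)
  simpa [Real.norm_eq_abs] using this

/-- row-wise Lipschitz bound
`max_i ‖F'_i(x) - F'_i(y)‖_∞ ≤ (n/2) ‖x - y‖_∞` for the Jacobian of the
likelihood-equation function of the affiliation model. -/
theorem jacobian_row_lipschitz (m n : ℕ) (hm : 1 ≤ m) (hmn : m ≤ n)
    (d : Fin m → ℝ) (b : Fin (n - 1) → ℝ) (x y : Idx m n → ℝ) :
    ∀ i : Idx m n, ‖jacF pf x i - jacF pf y i‖ ≤ ((n : ℝ) / 2) * ‖x - y‖ := by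
  intro i
  have hn1 : (1 : ℝ) ≤ (n : ℝ) := by exact_mod_cast hm.trans hmn
  have hxy : (0:ℝ) ≤ ‖x - y‖ := norm_nonneg _
  have hRHS : (0:ℝ) ≤ ((n : ℝ) / 2) * ‖x - y‖ := by positivity
  -- coordinate bound
  have hcoord : ∀ k : Idx m n, |x k - y k| ≤ ‖x - y‖ := by
    intro k
    have := norm_le_pi_norm (x - y) k
    simpa [Real.norm_eq_abs] using this
  have hbeta : ∀ j : Fin n, |betaF x j - betaF y j| ≤ ‖x - y‖ := by
    intro j
    unfold betaF
    split
    · exact hcoord _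
    · simpa using hxy
  -- key bound on differences of deriv pf at arguments
  have hkey : ∀ a b : ℝ, |a - b| ≤ 2 * ‖x - y‖ →
      |deriv pf a - deriv pf b| ≤ (1/2) * ‖x - y‖ := by
    intro a b hab
    rw [deriv_pf, deriv_pf]
    calc |pf' a - pf' b| ≤ (1/4) * |a - b| := pf'_lip a b
      _ ≤ (1/4) * (2 * ‖x - y‖) := by linarith [pf'_lip a b]
      _ = (1/2) * ‖x - y‖ := by ring
  have harg1 : ∀ (i : Fin m) (j : Fin n),
      |deriv pf (alphaF x i + betaF x j) - deriv pf (alphaF y i + betaF y j)|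
        ≤ (1/2) * ‖x - y‖ := by
    intro i j
    apply hkey
    have h1 := hcoord (Sum.inl i)
    have h2 := hbeta j
    have : (alphaF x i + betaF x j) - (alphaF y i + betaF y j)
        = (x (Sum.inl i) - y (Sum.inl i)) + (betaF x j - betaF y j) := by
      unfold alphaF; ring
    rw [this]
    calc |_ + _| ≤ |x (Sum.inl i) - y (Sum.inl i)| + |betaF x j - betaF y j| := abs_add_le _ _
      _ ≤ 2 * ‖x - y‖ := by linarith
  have harg2 : ∀ (i : Fin m) (j : Fin (n-1)),
      |deriv pf (alphaF x i + x (Sum.inr j)) - deriv pf (alphaF y i + y (Sum.inr j))|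
        ≤ (1/2) * ‖x - y‖ := by
    intro i j
    apply hkey
    have h1 := hcoord (Sum.inl i)
    have h2 := hcoord (Sum.inr j)
    have : (alphaF x i + x (Sum.inr j)) - (alphaF y i + y (Sum.inr j))
        = (x (Sum.inl i) - y (Sum.inl i)) + (x (Sum.inr j) - y (Sum.inr j)) := by
      unfold alphaF; ring
    rw [this]
    calc |_ + _| ≤ _ + _ := abs_add_le _ _
      _ ≤ 2 * ‖x - y‖ := by linarith
  rw [pi_norm_le_iff_of_nonneg hRHS]
  intro l
  rw [Pi.sub_apply, Real.norm_eq_abs]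
  match i, l with
  | Sum.inl a, Sum.inl a' =>
    show |(if a = a' then -∑ j : Fin n, deriv pf (alphaF x a + betaF x j) else 0) -
         (if a = a' then -∑ j : Fin n, deriv pf (alphaF y a + betaF y j) else 0)| ≤ _
    split
    · rw [neg_sub_neg, ← Finset.sum_sub_distrib]
      calc |∑ j : Fin n, (deriv pf (alphaF y a + betaF y j) - deriv pf (alphaF x a + betaF x j))|
          ≤ ∑ j : Fin n, |deriv pf (alphaF y a + betaF y j) - deriv pf (alphaF x a + betaF x j)| :=
            Finset.abs_sum_le_sum_abs _ _
        _ ≤ ∑ _j : Fin n, (1/2) * ‖x - y‖ := Finset.sum_le_sum fun j _ => by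
            rw [abs_sub_comm]; exact harg1 a j
        _ = (n : ℝ) * ((1/2) * ‖x - y‖) := by simp [Finset.sum_const]
        _ = ((n : ℝ) / 2) * ‖x - y‖ := by ring
    · simpa using hRHS
  | Sum.inl a, Sum.inr j =>
    show |(-deriv pf (alphaF x a + x (Sum.inr j))) - (-deriv pf (alphaF y a + y (Sum.inr j)))| ≤ _
    rw [neg_sub_neg, abs_sub_comm]
    calc |deriv pf (alphaF x a + x (Sum.inr j)) - deriv pf (alphaF y a + y (Sum.inr j))|
        ≤ (1/2) * ‖x - y‖ := harg2 a j
      _ ≤ ((n : ℝ) / 2) * ‖x - y‖ := by nlinarith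
  | Sum.inr j, Sum.inl a =>
    show |(-deriv pf (alphaF x a + x (Sum.inr j))) - (-deriv pf (alphaF y a + y (Sum.inr j)))| ≤ _
    rw [neg_sub_neg, abs_sub_comm]
    calc |deriv pf (alphaF x a + x (Sum.inr j)) - deriv pf (alphaF y a + y (Sum.inr j))|
        ≤ (1/2) * ‖x - y‖ := harg2 a j
      _ ≤ ((n : ℝ) / 2) * ‖x - y‖ := by nlinarith
  | Sum.inr j, Sum.inr j' =>
    show |(if j = j' then -∑ i : Fin m, deriv pf (alphaF x i + x (Sum.inr j)) else 0) -
         (if j = j' then -∑ i : Fin m, deriv pf (alphaF y i + y (Sum.inr j)) else 0)| ≤ _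
    split
    · rw [neg_sub_neg, ← Finset.sum_sub_distrib]
      have hmn' : (m : ℝ) ≤ (n : ℝ) := by exact_mod_cast hmn
      calc |∑ i : Fin m, (deriv pf (alphaF y i + y (Sum.inr j)) - deriv pf (alphaF x i + x (Sum.inr j)))|
          ≤ ∑ i : Fin m, |deriv pf (alphaF y i + y (Sum.inr j)) - deriv pf (alphaF x i + x (Sum.inr j))| :=
            Finset.abs_sum_le_sum_abs _ _
        _ ≤ ∑ _i : Fin m, (1/2) * ‖x - y‖ := Finset.sum_le_sum fun i _ => by
            rw [abs_sub_comm]; exact harg2 i j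
        _ = (m : ℝ) * ((1/2) * ‖x - y‖) := by simp [Finset.sum_const]
        _ ≤ ((n : ℝ) / 2) * ‖x - y‖ := by nlinarith
    · simpa using hRHS


end Affiliation
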